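/- Let p be an odd prime, ω := exp(2πi/p). For all i ∈ ZMod p with i ≠ 0, all j, τ, a, b ∈ ZMod p, and all c ∈ ZMod p with c ≠ 0, one has |(1/p²) ∑_{μ ∈ ZMod p} ω^{a·μ + b·i·μ + c·((μ(μ-1)/2)·i + μ·j + τ)}|² = 1/p³. (This is the probability of observing outcome (a,b,c) when Fourier sampling the coset state of (0,0,τ)·A_{i,j} over the abelian group (ZMod p)³, showing the forgetful abelian method yields the uniform distribution on such outcomes.) -/

import Mathlib

/-- `ω^v = exp(2πi·v.val/p)` for `v : ZMod p`, where `ω = exp(2πi/p)`. -/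
noncomputable def omegaPow (p : ℕ) (v : ZMod p) : ℂ :=
  Complex.exp (2 * Real.pi * Complex.I * (v.val : ℂ) / p)

lemma omegaPow_eq_stdAddChar (p : ℕ) [NeZero p] (v : ZMod p) :
    omegaPow p v = ZMod.stdAddChar v := by
  have h := ZMod.stdAddChar_coe (N := p) (v.val : ℤ)
  have hv : (((v.val : ℤ) : ZMod p)) = v := by push_cast; simp [ZMod.natCast_val]
  rw [hv] at h
  rw [h, omegaPow]
  push_cast
  ring_nf

lemma sum_stdAddChar_mul (p : ℕ) [NeZero p] {d : ZMod p} (hd : d ≠ 0) :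
    ∑ μ : ZMod p, ZMod.stdAddChar (d * μ) = 0 := by
  have hprim := ZMod.isPrimitive_stdAddChar p
  have := AddChar.sum_eq_zero_of_ne_one (hprim hd)
  simpa [AddChar.mulShift_apply] using this

/-- Let `p` be an odd prime and `ω = exp(2πi/p)`. For all `i ≠ 0`,
all `j, τ, a, b ∈ ZMod p` and all `c ≠ 0`,
`|(1/p²) ∑_μ ω^{aμ + biμ + c((μ(μ-1)/2)i + μj + τ)}|² = 1/p³`.
(This is the probability of observing `(a,b,c)` when Fourier sampling the coset state of
`(0,0,τ)·A_{i,j}` over the abelian group `(ZMod p)³`: the forgetful abelian method gives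
the uniform distribution on such outcomes.) -/
theorem forgetful_abelian_uniform (p : ℕ) [NeZero p] (hp : p.Prime) (ho : Odd p)
    (i : ZMod p) (hi : i ≠ 0) (j τ a b : ZMod p) (c : ZMod p) (hc : c ≠ 0) :
    ‖((p : ℂ) ^ 2)⁻¹ *
        ∑ μ : ZMod p,
          omegaPow p (a * μ + b * i * μ + c * (μ * (μ - 1) * (2 : ZMod p)⁻¹ * i + μ * j + τ))‖ ^ 2 =
      1 / (p : ℝ) ^ 3 := by
  haveI : Fact p.Prime := ⟨hp⟩
  set ψ := ZMod.stdAddChar (N := p) with hψ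
  set f : ZMod p → ZMod p :=
    fun μ => a * μ + b * i * μ + c * (μ * (μ - 1) * (2 : ZMod p)⁻¹ * i + μ * j + τ) with hf
  have hchar : 0 < ringChar (ZMod p) := by
    rw [ZMod.ringChar_zmod_n]; exact hp.pos
  set S : ℂ := ∑ μ : ZMod p, ψ (f μ) with hS
  have h2 : (2 : ZMod p) * (2 : ZMod p)⁻¹ = 1 := by
    apply ZMod.mul_inv_of_unit
    apply ZMod.isUnit_iff_coprime 2 p |>.mpr
    · simpa [Nat.coprime_two_left] using ho
  have hci : c * i ≠ 0 := mul_ne_zero hc hi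
  have hkey : ∀ μ δ : ZMod p, f μ - f (μ + δ) =
      (-(c * i * δ)) * μ + (-(c * i) * (2 : ZMod p)⁻¹ * δ * (δ - 1) - (a + b * i + c * j) * δ) := by
    intro μ δ
    simp only [hf]
    linear_combination (-(c * i * μ * δ)) * h2
  -- |S|² = p
  have hnorm : S * (starRingEnd ℂ) S = p := by
    have hconj : (starRingEnd ℂ) S = ∑ ν : ZMod p, ψ (-(f ν)) := by
      rw [hS, map_sum]
      refine Finset.sum_congr rfl fun ν _ => ?_
      rw [AddChar.starComp_apply hchar, AddChar.inv_apply]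
    rw [hconj, hS, Finset.sum_mul_sum]
    have step1 : ∀ μ : ZMod p, ∑ ν : ZMod p, ψ (f μ) * ψ (-(f ν)) =
        ∑ δ : ZMod p, ψ (f μ - f (μ + δ)) := by
      intro μ
      rw [← Equiv.sum_comp (Equiv.addLeft μ) (fun ν => ψ (f μ) * ψ (-(f ν)))]
      refine Finset.sum_congr rfl fun δ _ => ?_
      rw [← AddChar.map_add_eq_mul]
      simp [sub_eq_add_neg]
    calc ∑ μ : ZMod p, ∑ ν : ZMod p, ψ (f μ) * ψ (-(f ν))
        = ∑ μ : ZMod p, ∑ δ : ZMod p, ψ (f μ - f (μ + δ)) := by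
          exact Finset.sum_congr rfl fun μ _ => step1 μ
      _ = ∑ δ : ZMod p, ∑ μ : ZMod p, ψ (f μ - f (μ + δ)) := Finset.sum_comm
      _ = (p : ℂ) := by
          rw [Finset.sum_eq_single 0]
          · simp
          · intro δ _ hδ
            have : ∀ μ : ZMod p, ψ (f μ - f (μ + δ)) =
                ψ (-(c * i) * (2 : ZMod p)⁻¹ * δ * (δ - 1) - (a + b * i + c * j) * δ) *
                  ψ ((-(c * i * δ)) * μ) := by
              intro μ
              rw [hkey μ δ, ← AddChar.map_add_eq_mul, add_comm]
            simp_rw [this]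
            rw [← Finset.mul_sum, sum_stdAddChar_mul p (by
              simpa using mul_ne_zero (mul_ne_zero hc hi) hδ), mul_zero]
          · simp
  have hnormSq : Complex.normSq S = p := by
    have h := hnorm
    rw [Complex.mul_conj] at h
    exact_mod_cast h
  have hp0 : (p : ℝ) ≠ 0 := Nat.cast_ne_zero.mpr hp.ne_zero
  have hsum : (∑ μ : ZMod p,
      omegaPow p (a * μ + b * i * μ + c * (μ * (μ - 1) * (2 : ZMod p)⁻¹ * i + μ * j + τ))) = S := by
    rw [hS]
    exact Finset.sum_congr rfl fun μ _ => omegaPow_eq_stdAddChar p _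
  rw [hsum, Complex.sq_norm, Complex.normSq_mul, hnormSq]
  have : Complex.normSq (((p : ℂ) ^ 2)⁻¹) = ((p : ℝ) ^ 2)⁻¹ ^ 2 := by
    rw [show ((p : ℂ) ^ 2)⁻¹ = (((((p:ℝ))^2)⁻¹ : ℝ) : ℂ) by push_cast; ring, Complex.normSq_ofReal]
    ring
  rw [this]
  field_simp
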